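/- Let G be a finite nonabelian simple group. Then every function f : G → G is induced by a word with constants, i.e., the evaluation homomorphism ev : F₁ * G → G^G (sending x to the identity function and each constant c to the constant function c, with pointwise multiplication in G^G) is surjective. -/

import Mathlib

/-- The evaluation homomorphism `F₁ * G → G^G`, sending the free generator `x` to the
identity function `id_G` and each constant `c ∈ G` to the constant function with value
`c`; here `G^G` is the group of all functions `G → G` under pointwise multiplication. -/
noncomputable def evalHom (G : Type*) [Group G] :
    Monoid.Coprod (FreeGroup Unit) G →* (G → G) :=
  Monoid.Coprod.lift (FreeGroup.lift fun _ : Unit => (id : G → G))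
    (Pi.constMonoidHom G G)

section Aux

variable {G : Type*} [Group G]

/-- Precomposition with the affine map `x ↦ u * x * t`, as a monoid hom of `G^G`. -/
def precompAffine (u t : G) : (G → G) →* (G → G) where
  toFun f := fun x => f (u * x * t)
  map_one' := rfl
  map_mul' _ _ := rfl

/-- Substitution `x ↦ u x t` on words, fixing constants. -/
noncomputable def substAffine (u t : G) :
    Monoid.Coprod (FreeGroup Unit) G →* Monoid.Coprod (FreeGroup Unit) G :=
  Monoid.Coprod.lift
    (FreeGroup.lift fun _ : Unit =>
      Monoid.Coprod.inr u * Monoid.Coprod.inl (FreeGroup.of ()) * Monoid.Coprod.inr t)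
    (Monoid.Coprod.inr)

lemma evalHom_comp_subst (u t : G) :
    (precompAffine u t).comp (evalHom G) = (evalHom G).comp (substAffine u t) := by
  apply Monoid.Coprod.hom_ext
  · apply FreeGroup.ext_hom
    intro i
    show precompAffine u t (evalHom G (Monoid.Coprod.inl (FreeGroup.of i)))
        = evalHom G (substAffine u t (Monoid.Coprod.inl (FreeGroup.of i)))
    simp [evalHom, substAffine, Monoid.Coprod.lift_apply_inl, Monoid.Coprod.lift_apply_inr]
    funext x
    simp [precompAffine, Pi.constMonoidHom]
    rfl
  · apply MonoidHom.ext
    intro c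
    show precompAffine u t (evalHom G (Monoid.Coprod.inr c))
        = evalHom G (substAffine u t (Monoid.Coprod.inr c))
    simp [evalHom, substAffine, Monoid.Coprod.lift_apply_inr]
    rfl

lemma affine_mem {u t : G} {f : G → G} (hf : f ∈ (evalHom G).range) :
    (fun x => f (u * x * t)) ∈ (evalHom G).range := by
  obtain ⟨w, rfl⟩ := hf
  refine ⟨substAffine u t w, ?_⟩
  have := congrArg (fun φ => φ w) (evalHom_comp_subst u t (G := G))
  simpa [precompAffine] using this.symm

lemma const_mem (c : G) : (fun _ : G => c) ∈ (evalHom G).range :=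
  ⟨Monoid.Coprod.inr c, by simp [evalHom, Pi.constMonoidHom]; rfl⟩

lemma id_mem : (fun x : G => x) ∈ (evalHom G).range :=
  ⟨Monoid.Coprod.inl (FreeGroup.of ()), by simp [evalHom]; rfl⟩

/-- In a simple nonabelian group, the center is trivial. -/
lemma eq_one_of_central [IsSimpleGroup G] (hna : ¬ ∀ a b : G, a * b = b * a)
    {a : G} (ha : ∀ b : G, a * b = b * a) : a = 1 := by
  have hmem : a ∈ Subgroup.center G := Subgroup.mem_center_iff.mpr fun g => (ha g).symm
  rcases (inferInstance : (Subgroup.center G).Normal).eq_bot_or_eq_top with h | h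
  · rwa [h, Subgroup.mem_bot] at hmem
  · exfalso
    apply hna
    intro x y
    have hx : x ∈ Subgroup.center G := h ▸ Subgroup.mem_top x
    exact (Subgroup.mem_center_iff.mp hx y).symm

lemma normalClosure_singleton_eq_top [IsSimpleGroup G] {b : G} (hb : b ≠ 1) :
    Subgroup.normalClosure {b} = ⊤ := by
  rcases (Subgroup.normalClosure_normal (s := {b})).eq_bot_or_eq_top with h | h
  · exfalso
    have : b ∈ Subgroup.normalClosure {b} := Subgroup.subset_normalClosure rfl
    rw [h, Subgroup.mem_bot] at this
    exact hb this
  · exact h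

/-- Some conjugate of `b` fails to commute with `a`. -/
lemma exists_conj_not_commute [IsSimpleGroup G] (hna : ¬ ∀ a b : G, a * b = b * a)
    {a b : G} (ha : a ≠ 1) (hb : b ≠ 1) :
    ∃ c : G, a * (c * b * c⁻¹) ≠ (c * b * c⁻¹) * a := by
  by_contra hcon
  push_neg at hcon
  apply ha
  apply eq_one_of_central hna
  intro x
  have hx : x ∈ Subgroup.centralizer {a} := by
    have hxm : x ∈ Subgroup.normalClosure {b} := by
      rw [normalClosure_singleton_eq_top hb]; trivial
    refine (Subgroup.closure_le (Subgroup.centralizer {a})).mpr ?_ hxm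
    rintro y hy
    rw [Group.mem_conjugatesOfSet_iff] at hy
    obtain ⟨z, hz, hconj⟩ := hy
    rw [isConj_iff] at hconj
    obtain ⟨c, rfl⟩ := hconj
    rw [Set.mem_singleton_iff] at hz
    subst hz
    rw [SetLike.mem_coe, Subgroup.mem_centralizer_iff]
    rintro g hg
    rw [Set.mem_singleton_iff] at hg
    subst hg
    simpa [mul_assoc] using (hcon c)
  exact Subgroup.mem_centralizer_iff.mp hx a rfl

lemma stab_iff {S : Finset G} {c : G} (h : ∀ p ∈ S, p * c ∈ S) :
    ∀ y : G, y * c ∈ S ↔ y ∈ S := by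
  classical
  have himg : S.image (· * c) = S := by
    apply Finset.eq_of_subset_of_card_le
    · intro x hx
      rw [Finset.mem_image] at hx
      obtain ⟨p, hp, rfl⟩ := hx
      exact h p hp
    · exact le_of_eq (Finset.card_image_of_injective _ (mul_left_injective c)).symm
  intro y
  constructor
  · intro hy
    rw [← himg, Finset.mem_image] at hy
    obtain ⟨p, hp, he⟩ := hy
    have : p = y := mul_left_injective c he
    exact this ▸ hp
  · exact h y

/-- The right stabilizer of a finite set as a subgroup. -/
def rightStab (S : Finset G) : Subgroup G where
  carrier := {c | ∀ y : G, y * c ∈ S ↔ y ∈ S}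
  one_mem' := by intro y; simp
  mul_mem' := by
    intro x y hx hy z
    rw [← mul_assoc]
    exact (hy (z * x)).trans (hx z)
  inv_mem' := by
    intro x hx y
    have h := hx (y * x⁻¹)
    rw [inv_mul_cancel_right] at h
    exact h.symm

end Aux

open scoped commutatorElement

/-- Let `G` be a finite nonabelian simple group. Then every function `f : G → G` is
induced by a word with constants, i.e. the evaluation homomorphism
`ev : F₁ * G → G^G` is surjective. -/
theorem evalHom_surjective (G : Type*) [Group G] [Fintype G] [IsSimpleGroup G]
    (hna : ¬ ∀ a b : G, a * b = b * a) :
    Function.Surjective (evalHom G) := by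
  classical
  set H := (evalHom G).range with hH
  intro f
  suffices hsuff : ∀ g : G → G, g ∈ H by exact hsuff f
  clear f
  -- a nontrivial element
  obtain ⟨a₁, h1⟩ := not_forall.mp hna
  have ha1 : a₁ ≠ 1 := by rintro rfl; exact h1 (fun b => by rw [one_mul, mul_one])
  -- supports
  let supp : (G → G) → Finset G := fun g => Finset.univ.filter (fun x => g x ≠ 1)
  have mem_supp : ∀ (g : G → G) (x : G), x ∈ supp g ↔ g x ≠ 1 := by
    intro g x; simp [supp]
  -- minimal nonempty support size
  let P : ℕ → Prop := fun n => ∃ g : G → G, g ∈ H ∧ (supp g).Nonempty ∧ (supp g).card = n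
  have hPid : P (supp (fun x : G => x)).card :=
    ⟨(fun x : G => x), id_mem, ⟨a₁, (mem_supp _ _).mpr ha1⟩, rfl⟩
  have hPex : ∃ n, P n := ⟨_, hPid⟩
  set n := Nat.find hPex with hn
  obtain ⟨g, hgH, hgne, hgcard⟩ : P n := Nat.find_spec hPex
  have hmin : ∀ m < n, ¬ P m := fun m hm => Nat.find_min hPex hm
  -- n < card G  (since supp id misses 1)
  have hnlt : n < Fintype.card G := by
    have h1m : (1 : G) ∉ supp (fun x : G => x) := by rw [mem_supp]; simp
    calc n ≤ (supp (fun x : G => x)).card := Nat.find_min' hPex hPid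
      _ < Fintype.card G := Finset.card_lt_card
          (Finset.ssubset_univ_iff.mpr (fun h => h1m (h ▸ Finset.mem_univ 1)))
  -- claim: n = 1
  have hn1 : n = 1 := by
    rcases Nat.lt_or_ge n 2 with h2 | h2
    · rcases Nat.lt_or_ge n 1 with h0 | h0
      · exfalso
        rw [Nat.lt_one_iff] at h0
        rw [h0, Finset.card_eq_zero] at hgcard
        exact hgne.ne_empty hgcard
      · omega
    · exfalso
      obtain ⟨a, haS, b, hbS, hab⟩ := Finset.one_lt_card.mp (by rw [hgcard]; exact h2)
      -- an affine map sending a into supp g and b out of it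
      have hafe : ∃ u t : G, (u * a * t ∈ supp g) ∧ (u * b * t ∉ supp g) := by
        by_contra hcon
        push_neg at hcon
        -- supp g is right-invariant under conjugates of a⁻¹ * b
        have hab1' : a⁻¹ * b ≠ 1 := by
          intro h
          exact hab (by rw [← mul_one a, ← h, mul_inv_cancel_left])
        have hstab : ∀ c : G, c ∈ rightStab (supp g) := by
          intro c
          have hc : c ∈ Subgroup.normalClosure {a⁻¹ * b} := by
            rw [normalClosure_singleton_eq_top hab1']; trivial
          refine (Subgroup.closure_le (rightStab (supp g))).mpr ?_ hc
          rintro y hy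
          rw [Group.mem_conjugatesOfSet_iff] at hy
          obtain ⟨z, hz, hconj⟩ := hy
          rw [isConj_iff] at hconj
          obtain ⟨t, rfl⟩ := hconj
          rw [Set.mem_singleton_iff] at hz
          subst hz
          show ∀ p : G, p * (t * (a⁻¹ * b) * t⁻¹) ∈ supp g ↔ p ∈ supp g
          apply stab_iff
          intro p hp
          have hmem : p * t * a⁻¹ * a * t⁻¹ ∈ supp g := by
            have he : p * t * a⁻¹ * a * t⁻¹ = p := by group
            rw [he]; exact hp
          have := hcon (p * t * a⁻¹) t⁻¹ hmem
          have he2 : p * t * a⁻¹ * b * t⁻¹ = p * (t * (a⁻¹ * b) * t⁻¹) := by group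
          rwa [he2] at this
        -- hence supp g = univ, contradiction with hnlt
        have hall : ∀ x : G, x ∈ supp g := by
          intro x
          have := hstab (a⁻¹ * x) a
          rw [mul_inv_cancel_left] at this
          exact this.mpr haS
        have : supp g = Finset.univ := Finset.eq_univ_iff_forall.mpr hall
        rw [this, Finset.card_univ] at hgcard
        omega
      obtain ⟨u, t, haf1, haf2⟩ := hafe
      -- shrink the support
      set g₂ : G → G := fun x => g (u * x * t) with hg₂
      have hg₂H : g₂ ∈ H := affine_mem hgH
      have hg₂a : g₂ a ≠ 1 := (mem_supp g _).mp haf1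
      have hg₂b : g₂ b = 1 := by
        by_contra hne
        exact haf2 ((mem_supp g _).mpr hne)
      have hga : g a ≠ 1 := (mem_supp g a).mp haS
      obtain ⟨c, hc⟩ := exists_conj_not_commute hna hga hg₂a
      set k : G → G := (fun _ => c) * g₂ * (fun _ => c⁻¹) with hk
      have hkH : k ∈ H := mul_mem (mul_mem (const_mem c) hg₂H) (const_mem c⁻¹)
      have hkx : ∀ x, k x = c * g₂ x * c⁻¹ := fun x => rfl
      set h : G → G := ⁅g, k⁆ with hhdef
      have hhH : h ∈ H := by
        show g * k * g⁻¹ * k⁻¹ ∈ H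
        exact mul_mem (mul_mem (mul_mem hgH hkH) (inv_mem hgH)) (inv_mem hkH)
      have hhx : ∀ x, h x = ⁅g x, k x⁆ := fun x => rfl
      have hhb : h b = 1 := by
        rw [hhx, hkx, hg₂b, mul_one, mul_inv_cancel]
        exact commutatorElement_one_right _
      have hhoff : ∀ x, g x = 1 → h x = 1 := by
        intro x hx
        rw [hhx, hx]
        exact commutatorElement_one_left _
      have hha : h a ≠ 1 := by
        rw [hhx, hkx]
        rw [Ne, commutatorElement_eq_one_iff_mul_comm]
        exact hc
      have hsub : supp h ⊆ (supp g).erase b := by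
        intro x hx
        rw [mem_supp] at hx
        rw [Finset.mem_erase, mem_supp]
        constructor
        · rintro rfl; exact hx hhb
        · intro hgx; exact hx (hhoff x hgx)
      have hcardlt : (supp h).card < n := by
        calc (supp h).card ≤ ((supp g).erase b).card := Finset.card_le_card hsub
          _ = n - 1 := by rw [Finset.card_erase_of_mem hbS, hgcard]
          _ < n := by omega
      exact hmin _ hcardlt ⟨h, hhH, ⟨a, (mem_supp h a).mpr hha⟩, rfl⟩
  -- supp g = {a₀}
  obtain ⟨a₀, ha₀⟩ := Finset.card_eq_one.mp (by rw [hgcard, hn1])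
  have hga₀ : g a₀ ≠ 1 := by
    rw [← mem_supp, ha₀]; exact Finset.mem_singleton_self a₀
  have hgoff : ∀ x, x ≠ a₀ → g x = 1 := by
    intro x hx
    by_contra hne
    have := (mem_supp g x).mpr hne
    rw [ha₀, Finset.mem_singleton] at this
    exact hx this
  -- one-point functions are in the range
  have he : ∀ a b : G, ∃ e : G → G, e ∈ H ∧ e a = b ∧ ∀ x, x ≠ a → e x = 1 := by
    intro a b
    set g₃ : G → G := fun x => g (a₀ * a⁻¹ * x * 1) with hg₃
    have hg₃H : g₃ ∈ H := affine_mem hgH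
    have hg₃a : g₃ a ≠ 1 := by
      show g (a₀ * a⁻¹ * a * 1) ≠ 1
      rw [mul_one, inv_mul_cancel_right]
      exact hga₀
    have hg₃off : ∀ x, x ≠ a → g₃ x = 1 := by
      intro x hx
      apply hgoff
      rw [mul_one]
      intro hxe
      apply hx
      have : a₀ * a⁻¹ * x = a₀ * a⁻¹ * a := by rw [hxe, inv_mul_cancel_right]
      exact mul_left_cancel this
    -- the subgroup of values at a of one-point functions supported at a
    set I : Subgroup G :=
      { carrier := {w | ∃ e : G → G, e ∈ H ∧ e a = w ∧ ∀ x, x ≠ a → e x = 1}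
        one_mem' := ⟨1, one_mem H, rfl, fun _ _ => rfl⟩
        mul_mem' := by
          rintro w₁ w₂ ⟨e₁, he₁, rfl, hf₁⟩ ⟨e₂, he₂, rfl, hf₂⟩
          refine ⟨e₁ * e₂, mul_mem he₁ he₂, rfl, fun x hx => ?_⟩
          show e₁ x * e₂ x = 1
          rw [hf₁ x hx, hf₂ x hx, mul_one]
        inv_mem' := by
          rintro w ⟨e, heH, rfl, hf⟩
          refine ⟨e⁻¹, inv_mem heH, rfl, fun x hx => ?_⟩
          show (e x)⁻¹ = 1
          rw [hf x hx, inv_one] } with hI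
    have hInormal : I.Normal := by
      constructor
      rintro w ⟨e, heH, rfl, hf⟩ c
      refine ⟨(fun _ => c) * e * (fun _ => c⁻¹),
        mul_mem (mul_mem (const_mem c) heH) (const_mem c⁻¹), rfl, fun x hx => ?_⟩
      show c * e x * c⁻¹ = 1
      rw [hf x hx, mul_one, mul_inv_cancel]
    have hItop : I = ⊤ := by
      rcases hInormal.eq_bot_or_eq_top with hbot | htop
      · exfalso
        have : g₃ a ∈ I := ⟨g₃, hg₃H, rfl, hg₃off⟩
        rw [hbot, Subgroup.mem_bot] at this
        exact hg₃a this
      · exact htop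
    have : b ∈ I := by rw [hItop]; trivial
    exact this
  -- assemble an arbitrary function from one-point functions
  have key : ∀ (s : Finset G) (f : G → G), supp f ⊆ s → f ∈ H := by
    intro s
    induction s using Finset.induction_on with
    | empty =>
      intro f hf
      have : f = 1 := by
        funext x
        by_contra hx
        exact absurd (hf ((mem_supp f x).mpr hx)) (Finset.notMem_empty x)
      rw [this]; exact one_mem H
    | @insert a s ha ih =>
      intro f hf
      obtain ⟨e, heH, hea, heoff⟩ := he a (f a)
      set f' : G → G := e⁻¹ * f with hf'
      have hf'H : f' ∈ H → f ∈ H := by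
        intro h
        have : f = e * f' := by
          funext x
          show f x = e x * ((e x)⁻¹ * f x)
          rw [← mul_assoc, mul_inv_cancel, one_mul]
        rw [this]
        exact mul_mem heH h
      apply hf'H
      apply ih
      intro x hx
      rw [mem_supp] at hx
      have hxa : x ≠ a := by
        rintro rfl
        apply hx
        show (e x)⁻¹ * f x = 1
        rw [hea, inv_mul_cancel]
      have hfx : f' x = f x := by
        show (e x)⁻¹ * f x = f x
        rw [heoff x hxa, inv_one, one_mul]
      have : x ∈ supp f := (mem_supp f x).mpr (by rwa [hfx] at hx)
      have hmem := hf this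
      rw [Finset.mem_insert] at hmem
      exact hmem.resolve_left hxa
  intro f
  exact key Finset.univ f (Finset.subset_univ _)
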